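/- Locality for independence logic with lax semantics: if V ⊇ Fr(φ) then M ⊨_X φ iff M ⊨_{X↾V} φ, where X↾V = {s↾V : s ∈ X}. -/

import Mathlib

open FirstOrder Language

/-- Formulas of independence logic over a first-order language `L`, with variables `ℕ`:
first-order formulas, conditional independence atoms `t1 ⊥_{t3} t2` (written
`indep t1 t2 t3`) between tuples (lists) of terms, conjunction, disjunction, and
existential and universal quantification. -/
inductive TeamFormula (L : Language) : Type _ where
  | fo (φ : L.Formula ℕ)
  | indep (t1 t2 t3 : List (L.Term ℕ))
  | and (φ ψ : TeamFormula L)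
  | or (φ ψ : TeamFormula L)
  | ex (x : ℕ) (φ : TeamFormula L)
  | all (x : ℕ) (φ : TeamFormula L)

namespace TeamFormula

variable {L : Language}

/-- The set of free variables of an independence-logic formula. -/
def Fr : TeamFormula L → Set ℕ
  | .fo φ => ↑φ.freeVarFinset
  | .indep t1 t2 t3 => ↑((t1 ++ t2 ++ t3).foldr (fun t s => t.varFinset ∪ s) ∅)
  | .and φ ψ => φ.Fr ∪ ψ.Fr
  | .or φ ψ => φ.Fr ∪ ψ.Fr
  | .ex x φ => φ.Fr \ {x}
  | .all x φ => φ.Fr \ {x}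

/-- A team is a set of assignments. -/
abbrev Team (M : Type*) := Set (ℕ → M)

/-- The value of a tuple (list) of terms under an assignment. -/
def listVal {M : Type*} [L.Structure M] (ts : List (L.Term ℕ)) (s : ℕ → M) : List M :=
  ts.map fun t => t.realize s

/-- Lax team semantics for independence logic.  First-order formulas are evaluated
pointwise; disjunction splits the team into a union; `∃x φ` is witnessed by a function
`F` from the team to nonempty sets of elements, extending the team to
`X(F/x) = {s(a/x) : s ∈ X, a ∈ F s}`; `∀x φ` duplicates the team to `X(M/x)`. -/
def Sat (M : Type*) [L.Structure M] : TeamFormula L → Team M → Prop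
  | .fo φ, X => ∀ s ∈ X, φ.Realize s
  | .indep t1 t2 t3, X => ∀ s ∈ X, ∀ s' ∈ X, listVal t3 s = listVal t3 s' →
      ∃ s'' ∈ X, listVal t1 s'' = listVal t1 s ∧ listVal t3 s'' = listVal t3 s ∧
        listVal t2 s'' = listVal t2 s'
  | .and φ ψ, X => φ.Sat M X ∧ ψ.Sat M X
  | .or φ ψ, X => ∃ Y Z : Team M, Y ∪ Z = X ∧ φ.Sat M Y ∧ ψ.Sat M Z
  | .ex x φ, X => ∃ F : (ℕ → M) → Set M, (∀ s ∈ X, (F s).Nonempty) ∧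
      φ.Sat M {s' | ∃ s ∈ X, ∃ a ∈ F s, s' = Function.update s x a}
  | .all x φ, X => φ.Sat M {s' | ∃ s ∈ X, ∃ a : M, s' = Function.update s x a}

section Aux

variable {L : Language} {M : Type*} [L.Structure M]

lemma term_congr {V : Set ℕ} {t : L.Term ℕ} (ht : ↑t.varFinset ⊆ V)
    {s s' : ℕ → M} (h : V.restrict s = V.restrict s') :
    t.realize s = t.realize s' := by
  rw [← Term.realize_restrictVar' ht (v := s), ← Term.realize_restrictVar' ht (v := s')]
  have hc : s ∘ (Subtype.val : V → ℕ) = s' ∘ Subtype.val := funext fun x => congrFun h x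
  rw [hc]

lemma fo_congr {V : Set ℕ} {φ : L.Formula ℕ} (hφ : ↑φ.freeVarFinset ⊆ V)
    {s s' : ℕ → M} (h : V.restrict s = V.restrict s') :
    φ.Realize s ↔ φ.Realize s' := by
  rw [show φ.Realize s = BoundedFormula.Realize φ s default from rfl,
    show φ.Realize s' = BoundedFormula.Realize φ s' default from rfl,
    ← BoundedFormula.realize_restrictFreeVar' hφ (v := s),
    ← BoundedFormula.realize_restrictFreeVar' hφ (v := s')]
  have : s ∘ (Subtype.val : V → ℕ) = s' ∘ Subtype.val := by
    funext x; exact congrFun h x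
  rw [this]

lemma varFinset_subset_foldr {t : L.Term ℕ} {l : List (L.Term ℕ)} (ht : t ∈ l) :
    ↑t.varFinset ⊆ (↑(l.foldr (fun t s => t.varFinset ∪ s) ∅) : Set ℕ) := by
  induction l with
  | nil => simp at ht
  | cons a l ih =>
    rcases List.mem_cons.mp ht with rfl | ht
    · intro x hx
      simp only [List.foldr, Finset.coe_union, Set.mem_union]
      exact Or.inl hx
    · intro x hx
      simp only [List.foldr, Finset.coe_union, Set.mem_union]
      exact Or.inr (ih ht hx)

lemma listVal_congr {V : Set ℕ} {l : List (L.Term ℕ)}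
    (hl : ∀ t ∈ l, ↑t.varFinset ⊆ V)
    {s s' : ℕ → M} (h : V.restrict s = V.restrict s') :
    listVal l s = listVal l s' := by
  unfold listVal
  exact List.map_congr_left fun t ht => term_congr (hl t ht) h

lemma update_restrict_congr {V : Set ℕ} {x : ℕ} {s s' : ℕ → M}
    (h : V.restrict s = V.restrict s') (a : M) :
    (insert x V).restrict (Function.update s x a)
      = (insert x V).restrict (Function.update s' x a) := by
  funext ⟨v, hv⟩
  by_cases hvx : v = x
  · subst hvx; simp [Set.restrict]
  · rcases hv with rfl | hv
    · exact absurd rfl hvx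
    · show Function.update s x a v = Function.update s' x a v
      rw [Function.update_of_ne hvx, Function.update_of_ne hvx]
      exact congrFun h ⟨v, hv⟩

lemma sat_of (φ : TeamFormula L) (V : Set ℕ) (hV : φ.Fr ⊆ V)
    (X Y : TeamFormula.Team M)
    (hXY : (fun s => V.restrict s) '' X = (fun s => V.restrict s) '' Y) :
    φ.Sat M X → φ.Sat M Y := by
  induction φ generalizing V X Y with
  | fo φ =>
    intro h s hs
    have : V.restrict s ∈ (fun s => V.restrict s) '' X := by
      rw [hXY]; exact ⟨s, hs, rfl⟩
    obtain ⟨s0, hs0, hres⟩ := this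
    exact (fo_congr hV hres).mp (h s0 hs0)
  | indep t1 t2 t3 =>
    intro h s hs s' hs' h3
    have hsub : ∀ t ∈ t1 ++ t2 ++ t3, ↑t.varFinset ⊆ V :=
      fun t ht => (varFinset_subset_foldr ht).trans hV
    have h1V : ∀ t ∈ t1, ↑t.varFinset ⊆ V := fun t ht => hsub t (by simp [ht])
    have h2V : ∀ t ∈ t2, ↑t.varFinset ⊆ V := fun t ht => hsub t (by simp [ht])
    have h3V : ∀ t ∈ t3, ↑t.varFinset ⊆ V := fun t ht => hsub t (by simp [ht])
    have hmem : ∀ u ∈ Y, ∃ u0 ∈ X, V.restrict u0 = V.restrict u := by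
      intro u hu
      have : V.restrict u ∈ (fun s => V.restrict s) '' X := by
        rw [hXY]; exact ⟨u, hu, rfl⟩
      obtain ⟨u0, hu0, hres⟩ := this
      exact ⟨u0, hu0, hres⟩
    obtain ⟨s0, hs0, hres⟩ := hmem s hs
    obtain ⟨s0', hs0', hres'⟩ := hmem s' hs'
    have h30 : listVal t3 s0 = listVal t3 s0' := by
      rw [listVal_congr h3V hres, listVal_congr h3V hres', h3]
    obtain ⟨u, hu, hu1, hu3, hu2⟩ := h s0 hs0 s0' hs0' h30
    have : V.restrict u ∈ (fun s => V.restrict s) '' Y := by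
      rw [← hXY]; exact ⟨u, hu, rfl⟩
    obtain ⟨w, hw, hwres0⟩ := this
    have hwres : V.restrict w = V.restrict u := hwres0
    refine ⟨w, hw, ?_, ?_, ?_⟩
    · rw [listVal_congr h1V hwres, hu1, listVal_congr h1V hres]
    · rw [listVal_congr h3V hwres, hu3, listVal_congr h3V hres]
    · rw [listVal_congr h2V hwres, hu2, listVal_congr h2V hres']
  | and φ ψ ihφ ihψ =>
    rintro ⟨h1, h2⟩
    have hVφ : φ.Fr ⊆ V := fun v hv => hV (Or.inl hv)
    have hVψ : ψ.Fr ⊆ V := fun v hv => hV (Or.inr hv)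
    exact ⟨ihφ V hVφ X Y hXY h1, ihψ V hVψ X Y hXY h2⟩
  | or φ ψ ihφ ihψ =>
    rintro ⟨Y1, Z1, hYZ, h1, h2⟩
    have hVφ : φ.Fr ⊆ V := fun v hv => hV (Or.inl hv)
    have hVψ : ψ.Fr ⊆ V := fun v hv => hV (Or.inr hv)
    refine ⟨{s ∈ Y | V.restrict s ∈ (fun s => V.restrict s) '' Y1},
           {s ∈ Y | V.restrict s ∈ (fun s => V.restrict s) '' Z1}, ?_, ?_, ?_⟩
    · ext s
      constructor
      · rintro (⟨hs, _⟩ | ⟨hs, _⟩) <;> exact hs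
      · intro hs
        have : V.restrict s ∈ (fun s => V.restrict s) '' X := by
          rw [hXY]; exact ⟨s, hs, rfl⟩
        obtain ⟨s0, hs0, hres⟩ := this
        rw [← hYZ] at hs0
        rcases hs0 with hs0 | hs0
        · exact Or.inl ⟨hs, ⟨s0, hs0, hres⟩⟩
        · exact Or.inr ⟨hs, ⟨s0, hs0, hres⟩⟩
    · refine ihφ V hVφ Y1 _ ?_ h1
      ext p
      constructor
      · rintro ⟨s, hs, rfl⟩
        have hsX : s ∈ X := by rw [← hYZ]; exact Or.inl hs
        have : V.restrict s ∈ (fun s => V.restrict s) '' Y := by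
          rw [← hXY]; exact ⟨s, hsX, rfl⟩
        obtain ⟨w, hw, hwres0⟩ := this
        have hwres : V.restrict w = V.restrict s := hwres0
        exact ⟨w, ⟨hw, ⟨s, hs, hwres.symm⟩⟩, hwres⟩
      · rintro ⟨w, ⟨hw, ⟨s, hs, hres⟩⟩, rfl⟩
        exact ⟨s, hs, hres⟩
    · refine ihψ V hVψ Z1 _ ?_ h2
      ext p
      constructor
      · rintro ⟨s, hs, rfl⟩
        have hsX : s ∈ X := by rw [← hYZ]; exact Or.inr hs
        have : V.restrict s ∈ (fun s => V.restrict s) '' Y := by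
          rw [← hXY]; exact ⟨s, hsX, rfl⟩
        obtain ⟨w, hw, hwres0⟩ := this
        have hwres : V.restrict w = V.restrict s := hwres0
        exact ⟨w, ⟨hw, ⟨s, hs, hwres.symm⟩⟩, hwres⟩
      · rintro ⟨w, ⟨hw, ⟨s, hs, hres⟩⟩, rfl⟩
        exact ⟨s, hs, hres⟩
  | ex x φ ihφ =>
    rintro ⟨F, hFne, hFsat⟩
    have hVφ : φ.Fr ⊆ insert x V := by
      intro v hv
      by_cases hvx : v = x
      · exact Or.inl hvx
      · exact Or.inr (hV ⟨hv, hvx⟩)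
    refine ⟨fun s => {a | ∃ s0 ∈ X, V.restrict s0 = V.restrict s ∧ a ∈ F s0}, ?_, ?_⟩
    · intro s hs
      have : V.restrict s ∈ (fun s => V.restrict s) '' X := by
        rw [hXY]; exact ⟨s, hs, rfl⟩
      obtain ⟨s0, hs0, hres⟩ := this
      obtain ⟨a, ha⟩ := hFne s0 hs0
      exact ⟨a, s0, hs0, hres, ha⟩
    · refine ihφ (insert x V) hVφ _ _ ?_ hFsat
      ext p
      constructor
      · rintro ⟨s', ⟨s0, hs0, a, ha, rfl⟩, rfl⟩
        have : V.restrict s0 ∈ (fun s => V.restrict s) '' Y := by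
          rw [← hXY]; exact ⟨s0, hs0, rfl⟩
        obtain ⟨w, hw, hwres0⟩ := this
        have hwres : V.restrict w = V.restrict s0 := hwres0
        refine ⟨Function.update w x a, ⟨w, hw, a, ⟨s0, hs0, hwres.symm, ha⟩, rfl⟩, ?_⟩
        exact update_restrict_congr hwres a
      · rintro ⟨s', ⟨w, hw, a, ⟨s0, hs0, hres, ha⟩, rfl⟩, rfl⟩
        refine ⟨Function.update s0 x a, ⟨s0, hs0, a, ha, rfl⟩, ?_⟩
        exact update_restrict_congr hres a
  | all x φ ihφ =>
    intro h
    have hVφ : φ.Fr ⊆ insert x V := by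
      intro v hv
      by_cases hvx : v = x
      · exact Or.inl hvx
      · exact Or.inr (hV ⟨hv, hvx⟩)
    refine ihφ (insert x V) hVφ _ _ ?_ h
    ext p
    constructor
    · rintro ⟨s', ⟨s0, hs0, a, rfl⟩, rfl⟩
      have : V.restrict s0 ∈ (fun s => V.restrict s) '' Y := by
        rw [← hXY]; exact ⟨s0, hs0, rfl⟩
      obtain ⟨w, hw, hwres0⟩ := this
      have hwres : V.restrict w = V.restrict s0 := hwres0
      exact ⟨Function.update w x a, ⟨w, hw, a, rfl⟩,
        update_restrict_congr hwres a⟩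
    · rintro ⟨s', ⟨w, hw, a, rfl⟩, rfl⟩
      have : V.restrict w ∈ (fun s => V.restrict s) '' X := by
        rw [hXY]; exact ⟨w, hw, rfl⟩
      obtain ⟨s0, hs0, hres0⟩ := this
      have hres : V.restrict s0 = V.restrict w := hres0
      exact ⟨Function.update s0 x a, ⟨s0, hs0, a, rfl⟩,
        update_restrict_congr hres a⟩

end Aux

end TeamFormula

/-- locality of lax team semantics for independence logic.  If
`V ⊇ Fr(φ)`, then satisfaction depends only on the restriction `X↾V` of the team to the
variables in `V`: any two teams with the same restriction to `V` satisfy the same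
formulas whose free variables are contained in `V`.  In particular `M ⊨_X φ` iff
`M ⊨_{X↾V} φ`. -/
theorem TeamFormula.locality {L : FirstOrder.Language} {M : Type*} [L.Structure M]
    (φ : TeamFormula L) (V : Set ℕ) (hV : φ.Fr ⊆ V)
    (X Y : TeamFormula.Team M)
    (hXY : (fun s => V.restrict s) '' X = (fun s => V.restrict s) '' Y) :
    φ.Sat M X ↔ φ.Sat M Y :=
  ⟨TeamFormula.sat_of φ V hV X Y hXY, TeamFormula.sat_of φ V hV Y X hXY.symm⟩
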